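/- Let η ∈ ℤ₂ with η ≡ 2 (mod 4), and set G = ℤ[1/η] ∩ ℤ₂ (the set of 2-adic integers expressible as integer polynomials in 1/η) and H = G ∩ 2ℤ₂. Then [G : H] = 2 and the map f(a) = a/η maps H into G, so f restricts to a core-free virtual endomorphism of G. -/
import Mathlib


/-- The additive subgroup `G = ℤ[1/η] ∩ ℤ₂` of `ℤ₂`: 2-adic integers expressible as
integer polynomials in `1/η`. -/
noncomputable def zEtaInt (η : ℤ_[2]) : AddSubgroup ℤ_[2] where
  carrier := {a | ∃ p : Polynomial ℤ, (a : ℚ_[2]) = Polynomial.aeval ((η : ℚ_[2]))⁻¹ p}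
  zero_mem' := ⟨0, by simp⟩
  add_mem' := by
    rintro a b ⟨p, hp⟩ ⟨q, hq⟩
    exact ⟨p + q, by push_cast [hp, hq]; simp⟩
  neg_mem' := by
    rintro a ⟨p, hp⟩
    exact ⟨-p, by push_cast [hp]; simp⟩

/-- The subgroup `2ℤ₂` of the additive group of 2-adic integers. -/
noncomputable def twoZ2 : AddSubgroup ℤ_[2] :=
  (AddMonoidHom.mulLeft (2 : ℤ_[2])).range

/-- with `G = ℤ[1/η] ∩ ℤ₂` and `H = G ∩ 2ℤ₂`, we have `[G : H] = 2`,
and `a ↦ a/η` maps `H` into `G`, restricting to a core-free virtual endomorphism of `G`. -/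
theorem zEtaInt_selfSimilar (η : ℤ_[2]) (hη : (4 : ℤ_[2]) ∣ (η - 2)) :
    ((zEtaInt η ⊓ twoZ2).addSubgroupOf (zEtaInt η)).index = 2 ∧
    ∃ f : ↥(zEtaInt η ⊓ twoZ2) →+ ℤ_[2],
      (∀ x : ↥(zEtaInt η ⊓ twoZ2), η * f x = (x : ℤ_[2])) ∧
      (∀ x : ↥(zEtaInt η ⊓ twoZ2), f x ∈ zEtaInt η) ∧
      (∀ K : AddSubgroup ℤ_[2], K ≤ zEtaInt η ⊓ twoZ2 →
        (∀ x : ↥(zEtaInt η ⊓ twoZ2), (x : ℤ_[2]) ∈ K → f x ∈ K) → K = ⊥) := by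
  obtain ⟨k, hk⟩ := hη
  set u : ℤ_[2] := 1 + 2 * k with hu
  have hηu : η = 2 * u := by rw [hu]; linear_combination hk
  have hcast2 : ((2 : ℕ) : ℤ_[2]) = 2 := by norm_num
  have h2norm : ‖(2 : ℤ_[2])‖ = 2⁻¹ := by
    have h := @PadicInt.norm_p 2 _
    rw [hcast2] at h
    rw [h]; norm_num
  have h2ne : (2 : ℤ_[2]) ≠ 0 := by
    intro h
    rw [h, norm_zero] at h2norm
    norm_num at h2norm
  have h2notunit : ¬ IsUnit (2 : ℤ_[2]) := by
    rw [PadicInt.isUnit_iff, h2norm]; norm_num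
  have hu_unit : IsUnit u := by
    by_contra h
    have hm : u ∈ IsLocalRing.maximalIdeal ℤ_[2] :=
      (IsLocalRing.mem_maximalIdeal u).mpr (mem_nonunits_iff.mpr h)
    rw [PadicInt.maximalIdeal_eq_span_p, Ideal.mem_span_singleton, hcast2] at hm
    have : (2 : ℤ_[2]) ∣ 1 := by
      have := dvd_sub hm (Dvd.intro k rfl)
      simpa [hu] using this
    exact h2notunit (isUnit_of_dvd_one this)
  have hunorm : ‖u‖ = 1 := PadicInt.isUnit_iff.mp hu_unit
  obtain ⟨w, hw⟩ := id hu_unit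
  set v : ℤ_[2] := ↑w⁻¹ with hv
  have huv : u * v = 1 := by rw [← hw, hv]; exact w.mul_inv
  have hηne : (η : ℚ_[2]) ≠ 0 := by
    have h0 : η ≠ 0 := by
      rw [hηu]
      exact mul_ne_zero h2ne hu_unit.ne_zero
    exact fun h => h0 (Subtype.ext h)
  have hmemtwo : ∀ z : ℤ_[2], z ∈ twoZ2 ↔ ∃ y, 2 * y = z := by
    intro z
    constructor
    · rintro ⟨y, rfl⟩; exact ⟨y, rfl⟩
    · rintro ⟨y, rfl⟩; exact ⟨y, rfl⟩
  have hkey : ∀ z : ℤ_[2], PadicInt.toZMod z = 0 ↔ z ∈ twoZ2 := by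
    intro z
    rw [← RingHom.mem_ker, PadicInt.ker_toZMod, PadicInt.maximalIdeal_eq_span_p,
      Ideal.mem_span_singleton, hcast2, hmemtwo]
    constructor
    · rintro ⟨y, rfl⟩; exact ⟨y, rfl⟩
    · rintro ⟨y, rfl⟩; exact ⟨y, rfl⟩
  have h1mem : (1 : ℤ_[2]) ∈ zEtaInt η := ⟨1, by push_cast; simp⟩
  constructor
  · -- index computation
    set ψ : ↥(zEtaInt η) →+ ZMod 2 :=
      (PadicInt.toZMod.toAddMonoidHom.comp (zEtaInt η).subtype) with hψ
    have hker : ψ.ker = (zEtaInt η ⊓ twoZ2).addSubgroupOf (zEtaInt η) := by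
      ext x
      simp only [AddMonoidHom.mem_ker, AddSubgroup.mem_addSubgroupOf, AddSubgroup.mem_inf, hψ,
        AddMonoidHom.coe_comp, RingHom.toAddMonoidHom_eq_coe, AddMonoidHom.coe_coe,
        Function.comp_apply, AddSubgroup.coe_subtype]
      rw [hkey]
      exact ⟨fun h => ⟨x.2, h⟩, fun h => h.2⟩
    have hsurj : Function.Surjective ψ := by
      intro c
      have h01 : ∀ c : ZMod 2, c = 0 ∨ c = 1 := by decide
      rcases h01 c with rfl | rfl
      · exact ⟨0, map_zero ψ⟩
      · refine ⟨⟨1, h1mem⟩, ?_⟩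
        simp [hψ]
    have hrange : ψ.range = ⊤ := (AddSubgroup.eq_top_iff' _).mpr fun c => hsurj c
    rw [← hker, AddSubgroup.index_ker, hrange]
    rw [Nat.card_congr AddSubgroup.topEquiv.toEquiv, Nat.card_eq_fintype_card, ZMod.card]
  · -- the virtual endomorphism
    have hhalf : ∀ x : ↥(zEtaInt η ⊓ twoZ2), ∃ y, 2 * y = (x : ℤ_[2]) := by
      intro x
      exact (hmemtwo _).mp (AddSubgroup.mem_inf.mp x.2).2
    choose half hhalfspec using hhalf
    have half_add : ∀ a b, half (a + b) = half a + half b := by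
      intro a b
      apply mul_left_cancel₀ h2ne
      rw [hhalfspec, mul_add, hhalfspec, hhalfspec]
      push_cast
      ring
    have half_zero : half 0 = 0 := by
      apply mul_left_cancel₀ h2ne
      rw [hhalfspec]
      simp
    have hfx : ∀ x : ↥(zEtaInt η ⊓ twoZ2), η * (v * half x) = (x : ℤ_[2]) := by
      intro x
      linear_combination (v * half x) * hηu + (2 * half x) * huv + hhalfspec x
    refine ⟨{ toFun := fun x => v * half x,
              map_zero' := by show v * half 0 = 0; rw [half_zero, mul_zero],
              map_add' := fun a b => by
                show v * half (a + b) = v * half a + v * half b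
                rw [half_add, mul_add] }, ?_, ?_, ?_⟩
    · exact hfx
    · intro x
      obtain ⟨p, hp⟩ := (AddSubgroup.mem_inf.mp x.2).1
      refine ⟨Polynomial.X * p, ?_⟩
      have hcast : (η : ℚ_[2]) * ((v * half x : ℤ_[2]) : ℚ_[2]) = ((x : ℤ_[2]) : ℚ_[2]) := by
        exact_mod_cast congrArg (fun z : ℤ_[2] => (z : ℚ_[2])) (hfx x)
      show ((v * half x : ℤ_[2]) : ℚ_[2]) = _
      rw [map_mul, Polynomial.aeval_X, ← hp]
      field_simp at hcast ⊢
      linear_combination hcast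
    · intro K hK hinv
      have hηnorm : ‖η‖ = 2⁻¹ := by
        rw [hηu, norm_mul, h2norm, hunorm, mul_one]
      have claim : ∀ n : ℕ, ∀ a ∈ K, ‖a‖ ≤ (2 : ℝ)⁻¹ ^ n := by
        intro n
        induction n with
        | zero => intro a _; simpa using a.norm_le_one
        | succ n ih =>
          intro a ha
          have hb : v * half ⟨a, hK ha⟩ ∈ K := hinv ⟨a, hK ha⟩ ha
          have hab : η * (v * half ⟨a, hK ha⟩) = a := hfx ⟨a, hK ha⟩
          have hnm : ‖η‖ * ‖v * half ⟨a, hK ha⟩‖ = ‖a‖ := by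
            rw [← norm_mul, hab]
          calc ‖a‖ = ‖η‖ * ‖v * half ⟨a, hK ha⟩‖ := hnm.symm
            _ ≤ 2⁻¹ * 2⁻¹ ^ n := by
                rw [hηnorm]
                exact mul_le_mul_of_nonneg_left (ih _ hb) (by norm_num)
            _ = 2⁻¹ ^ (n + 1) := by ring
      rw [AddSubgroup.eq_bot_iff_forall]
      intro a ha
      have h0 : ‖a‖ ≤ 0 := by
        refine ge_of_tendsto' (tendsto_pow_atTop_nhds_zero_of_lt_one
          (by norm_num : (0:ℝ) ≤ 2⁻¹) (by norm_num)) ?_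
        exact fun n => claim n a ha
      exact norm_eq_zero.mp (le_antisymm h0 (norm_nonneg a))
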